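/- If there exists a locally free β-twisted sheaf of rank n on M, then the class of β in H^2(M, O*) is torsion of order dividing n. -/
import Mathlib


/-- If there exists a locally free `β`-twisted sheaf of rank `n` on
`M`, then the class of `β` in `H²(M, O*)` is torsion of order dividing `n`.
Formalized at the level of Čech cochains over the ring `R` of functions: the
gluing isomorphisms of the rank-`n` locally free twisted sheaf are invertible
`n × n` transition matrices `A i j` satisfying the twisted cocycle condition
`A k i * A j k * A i j = β i j k • 1`.  Taking determinants, `δ(det A) = βⁿ`,
so `βⁿ` is a Čech coboundary, i.e. `[β]ⁿ = 1` in Čech cohomology. -/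
theorem twisted_cocycle_torsion_of_rank_n
    {ι R : Type*} [CommRing R] (n : ℕ)
    (A : ι → ι → Matrix (Fin n) (Fin n) R) (β : ι → ι → ι → Rˣ)
    (hinv : ∀ i j, IsUnit (A i j).det)
    (hA : ∀ i j k, A k i * A j k * A i j = (β i j k : R) • (1 : Matrix (Fin n) (Fin n) R)) :
    ∃ t : ι → ι → Rˣ, ∀ i j k, (β i j k) ^ n = t i j * t j k * t k i := by
  refine ⟨fun i j => (hinv i j).unit, fun i j k => ?_⟩
  have h := congrArg Matrix.det (hA i j k)
  rw [Matrix.det_mul, Matrix.det_mul, Matrix.det_smul, Matrix.det_one] at h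
  apply Units.ext
  push_cast
  simp only [IsUnit.unit_spec]
  rw [mul_one] at h
  simp only [Fintype.card_fin] at h; rw [← h]; ring
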